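/- Let J ∈ L¹(ℝⁿ) be nonnegative, even, not identically zero, with finite second moments whose second-moment matrix ∫ J(x) x⊗x dx is positive definite. Then Ψ(ξ) := (2π)^{-n}(𝓕[J](0) − 𝓕[J](ξ)) satisfies Ψ(ξ) > 0 for all ξ ≠ 0, and by the Riemann–Lebesgue lemma Ψ(ξ) → (2π)^{-n} 𝓕[J](0) > 0 as |ξ| → ∞; consequently there exist constants c₀, c₁ > 0 with Ψ(ξ) ≥ c₀|ξ|² for |ξ| ≤ 1 and Ψ(ξ) ≥ c₁ for |ξ| ≥ 1. -/

import Mathlib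

open MeasureTheory Real Filter

noncomputable section

open Complex
open scoped FourierTransform RealInnerProductSpace

/-- Fourier transform on ℝⁿ with the convention 𝓕[J](ξ) = ∫ e^{-i ξ·x} J(x) dx. -/
def FT {n : ℕ} (J : (Fin n → ℝ) → ℝ) (ξ : Fin n → ℝ) : ℂ :=
  ∫ x : Fin n → ℝ, Complex.exp (-(Complex.I * ((∑ i, ξ i * x i : ℝ) : ℂ))) * (J x : ℂ)

noncomputable section

lemma aux_cos_quadratic {t : ℝ} (h : t^2 ≤ 1) : t^2/4 ≤ 1 - Real.cos t := by
  have ht : |t| ≤ 1 := by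
    rw [← Real.sqrt_one]
    rw [← Real.sqrt_sq_eq_abs]
    exact Real.sqrt_le_sqrt h
  have hb := Real.cos_bound ht
  have h4 : |t|^4 ≤ t^2 := by
    have : |t|^4 ≤ |t|^2 := pow_le_pow_of_le_one (abs_nonneg t) ht (by norm_num)
    simpa [sq_abs] using this
  have := abs_le.1 hb
  nlinarith [this.1, this.2]

lemma aux_hyperplane_null {n : ℕ} {ξ : Fin n → ℝ} (hξ : ξ ≠ 0) (c : ℝ) :
    volume {x : Fin n → ℝ | (∑ i, ξ i * x i) = c} = 0 := by
  obtain ⟨i₀, hi₀⟩ : ∃ i, ξ i ≠ 0 := by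
    by_contra h; push_neg at h; exact hξ (funext fun i => h i)
  set L : (Fin n → ℝ) →ₗ[ℝ] ℝ :=
    { toFun := fun x => ∑ i, ξ i * x i
      map_add' := by intro x y; simp [mul_add, Finset.sum_add_distrib]
      map_smul' := by
        intro c x
        simp only [Pi.smul_apply, smul_eq_mul, RingHom.id_apply]
        rw [Finset.mul_sum]
        exact Finset.sum_congr rfl fun i _ => by ring } with hL
  have hsingle : L (Pi.single i₀ 1) = ξ i₀ := by
    simp [hL, Pi.single_apply, mul_ite, Finset.sum_ite_eq']
  have hker : LinearMap.ker L ≠ ⊤ := by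
    intro h
    have : L (Pi.single i₀ 1) = 0 := by
      have := LinearMap.ker_eq_top.1 h
      simp [this]
    exact hi₀ (by rw [← hsingle, this])
  set x₀ : Fin n → ℝ := (c / ξ i₀) • (Pi.single i₀ 1 : Fin n → ℝ) with hx₀
  have hLx₀ : L x₀ = c := by
    rw [hx₀, _root_.map_smul, hsingle, smul_eq_mul, div_mul_cancel₀ _ hi₀]
  have key : (fun y => x₀ + y) ⁻¹' {x : Fin n → ℝ | L x = c} = (LinearMap.ker L : Set (Fin n → ℝ)) := by
    ext y
    simp only [Set.mem_preimage, Set.mem_setOf_eq, SetLike.mem_coe, LinearMap.mem_ker, map_add,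
      hLx₀]
    constructor
    · intro h; linarith
    · intro h; rw [h]; ring
  have : volume {x : Fin n → ℝ | L x = c} = 0 := by
    rw [← measure_preimage_add volume x₀ {x : Fin n → ℝ | L x = c}, key]
    exact Measure.addHaar_submodule volume _ hker
  exact this


lemma aux_cont_sum {n : ℕ} (x : Fin n → ℝ) :
    Continuous fun ξ : Fin n → ℝ => ∑ i, ξ i * x i :=
  continuous_finset_sum _ fun i _ => (continuous_apply i).mul continuous_const

lemma aux_cont_sum' {n : ℕ} (ξ : Fin n → ℝ) :
    Continuous fun x : Fin n → ℝ => ∑ i, ξ i * x i :=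
  continuous_finset_sum _ fun i _ => continuous_const.mul (continuous_apply i)

lemma aux_integrable_cosmul {n : ℕ} {J : (Fin n → ℝ) → ℝ} (hint : Integrable J)
    (ξ : Fin n → ℝ) :
    Integrable fun x : Fin n → ℝ => J x * Real.cos (∑ i, ξ i * x i) := by
  have : Integrable fun x : Fin n → ℝ => Real.cos (∑ i, ξ i * x i) * J x := by
    refine Integrable.bdd_mul (c := 1) hint ?_ (Eventually.of_forall fun x => ?_)
    · exact (Real.continuous_cos.comp (aux_cont_sum' ξ)).aestronglyMeasurable
    · rw [Real.norm_eq_abs]; exact Real.abs_cos_le_one _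
  simpa [mul_comm] using this

lemma aux_integrable_one_sub_cosmul {n : ℕ} {J : (Fin n → ℝ) → ℝ} (hint : Integrable J)
    (ξ : Fin n → ℝ) :
    Integrable fun x : Fin n → ℝ => J x * (1 - Real.cos (∑ i, ξ i * x i)) := by
  have := hint.sub (aux_integrable_cosmul hint ξ)
  simpa [mul_sub, Pi.sub_def] using this

lemma aux_integrable_exp {n : ℕ} {J : (Fin n → ℝ) → ℝ} (hint : Integrable J) (ξ : Fin n → ℝ) :
    Integrable fun x : Fin n → ℝ =>
      Complex.exp (-(Complex.I * ((∑ i, ξ i * x i : ℝ) : ℂ))) * (J x : ℂ) := by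
  refine Integrable.bdd_mul (c := 1) hint.ofReal ?_ (Eventually.of_forall fun x => ?_)
  · have hc : Continuous fun x : Fin n → ℝ =>
        -(Complex.I * ((∑ i, ξ i * x i : ℝ) : ℂ)) :=
      (continuous_const.mul (Complex.continuous_ofReal.comp (aux_cont_sum' ξ))).neg
    exact (Complex.continuous_exp.comp hc).aestronglyMeasurable
  · rw [Complex.norm_exp]
    simp

lemma aux_FT_re {n : ℕ} {J : (Fin n → ℝ) → ℝ} (hint : Integrable J) (ξ : Fin n → ℝ) :
    (FT J ξ).re = ∫ x : Fin n → ℝ, J x * Real.cos (∑ i, ξ i * x i) := by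
  have h := integral_re (aux_integrable_exp hint ξ)
  have h' : (∫ x : Fin n → ℝ,
      Complex.exp (-(Complex.I * ((∑ i, ξ i * x i : ℝ) : ℂ))) * (J x : ℂ)).re =
      ∫ x : Fin n → ℝ,
        (Complex.exp (-(Complex.I * ((∑ i, ξ i * x i : ℝ) : ℂ))) * (J x : ℂ)).re := by
    simpa using h.symm
  rw [FT, h']
  refine integral_congr_ae (Eventually.of_forall fun x => ?_)
  have h1 : -(Complex.I * ((∑ i, ξ i * x i : ℝ) : ℂ)) =
      ((-(∑ i, ξ i * x i) : ℝ) : ℂ) * Complex.I := by push_cast; ring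
  simp only [h1, Complex.mul_re, Complex.ofReal_re, Complex.ofReal_im, mul_zero, sub_zero,
    Complex.exp_ofReal_mul_I_re, Real.cos_neg]
  ring

lemma aux_FT_zero_re {n : ℕ} {J : (Fin n → ℝ) → ℝ} (hint : Integrable J) :
    (FT J 0).re = ∫ x : Fin n → ℝ, J x := by
  rw [aux_FT_re hint 0]
  simp

lemma aux_cont_integral_cos {n : ℕ} {J : (Fin n → ℝ) → ℝ} (hint : Integrable J) :
    Continuous fun ξ : Fin n → ℝ => ∫ x : Fin n → ℝ, J x * Real.cos (∑ i, ξ i * x i) := by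
  refine continuous_of_dominated (bound := fun x => |J x|) ?_ ?_ hint.abs ?_
  · intro ξ
    exact hint.1.mul (Real.continuous_cos.comp (aux_cont_sum' ξ)).aestronglyMeasurable
  · intro ξ
    filter_upwards with x
    rw [Real.norm_eq_abs, abs_mul]
    calc |J x| * |Real.cos _| ≤ |J x| * 1 :=
          mul_le_mul_of_nonneg_left (Real.abs_cos_le_one _) (abs_nonneg _)
      _ = |J x| := mul_one _
  · filter_upwards with x
    exact continuous_const.mul (Real.continuous_cos.comp (aux_cont_sum x))

lemma aux_Q_pos {n : ℕ} {J : (Fin n → ℝ) → ℝ} (hint : Integrable J) (hpos : ∀ x, 0 ≤ J x)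
    (hne : 0 < ∫ x : Fin n → ℝ, J x) {ξ : Fin n → ℝ} (hξ : ξ ≠ 0) :
    0 < ∫ x : Fin n → ℝ, J x * (1 - Real.cos (∑ i, ξ i * x i)) := by
  have hfi := aux_integrable_one_sub_cosmul hint ξ
  have hf0 : ∀ x, 0 ≤ J x * (1 - Real.cos (∑ i, ξ i * x i)) := fun x =>
    mul_nonneg (hpos x) (by linarith [Real.cos_le_one (∑ i, ξ i * x i)])
  rcases (integral_nonneg (show 0 ≤ fun x => J x * (1 - Real.cos (∑ i, ξ i * x i)) from hf0)).lt_or_eq with h | h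
  · exact h
  · exfalso
    have hae : (fun x => J x * (1 - Real.cos (∑ i, ξ i * x i))) =ᵐ[volume] 0 :=
      (integral_eq_zero_iff_of_nonneg hf0 hfi).1 h.symm
    have hN : volume {x : Fin n → ℝ | ∃ k : ℤ, (k : ℝ) * (2 * π) = ∑ i, ξ i * x i} = 0 := by
      have hU : {x : Fin n → ℝ | ∃ k : ℤ, (k : ℝ) * (2 * π) = ∑ i, ξ i * x i} =
          ⋃ k : ℤ, {x : Fin n → ℝ | (∑ i, ξ i * x i) = (k : ℝ) * (2 * π)} := by
        ext x; simp [eq_comm]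
      rw [hU]
      exact measure_iUnion_null fun k => aux_hyperplane_null hξ _
    have hJ0 : J =ᵐ[volume] 0 := by
      have hNae : ∀ᵐ x : Fin n → ℝ,
          x ∉ {x : Fin n → ℝ | ∃ k : ℤ, (k : ℝ) * (2 * π) = ∑ i, ξ i * x i} :=
        measure_eq_zero_iff_ae_notMem.1 hN
      filter_upwards [hae, hNae] with x hx hnx
      rcases mul_eq_zero.1 hx with h' | h'
      · exact h'
      · exfalso
        have hcos : Real.cos (∑ i, ξ i * x i) = 1 := by linarith
        exact hnx ((Real.cos_eq_one_iff _).1 hcos)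
    have : (∫ x : Fin n → ℝ, J x) = 0 := integral_eq_zero_of_ae hJ0
    linarith


lemma aux_RL {n : ℕ} (J : (Fin n → ℝ) → ℝ) :
    Tendsto (FT J) (cocompact (Fin n → ℝ)) (nhds 0) := by
  classical
  set c : ℝ := (2 * π)⁻¹ with hc
  have h2π : (2 * π) ≠ 0 := by positivity
  have hcne : c ≠ 0 := inv_ne_zero h2π
  set f : EuclideanSpace ℝ (Fin n) → ℂ :=
    fun v => ((J ((WithLp.equiv 2 (Fin n → ℝ)) v) : ℝ) : ℂ) with hf
  have hRL : Tendsto (fun w : EuclideanSpace ℝ (Fin n) =>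
      ∫ v : EuclideanSpace ℝ (Fin n), 𝐞 (-⟪v, w⟫) • f v) (cocompact _) (nhds 0) :=
    tendsto_integral_exp_inner_smul_cocompact f
  set φ : (Fin n → ℝ) ≃ₜ EuclideanSpace ℝ (Fin n) :=
    (Homeomorph.smulOfNeZero c hcne).trans
      (PiLp.continuousLinearEquiv 2 ℝ (fun _ : Fin n => ℝ)).symm.toHomeomorph with hφ
  have htend : Tendsto φ (cocompact (Fin n → ℝ)) (cocompact (EuclideanSpace ℝ (Fin n))) :=
    φ.toCocompactMap.cocompact_tendsto'
  have key : ∀ ξ : Fin n → ℝ,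
      FT J ξ = ∫ v : EuclideanSpace ℝ (Fin n), 𝐞 (-⟪v, φ ξ⟫) • f v := by
    intro ξ
    have hmp := (EuclideanSpace.volume_preserving_symm_measurableEquiv_toLp (Fin n)).symm
    have h1 : ∫ v : EuclideanSpace ℝ (Fin n), 𝐞 (-⟪v, φ ξ⟫) • f v =
        ∫ x : Fin n → ℝ, 𝐞 (-⟪(MeasurableEquiv.toLp 2 (Fin n → ℝ)) x, φ ξ⟫) •
          f ((MeasurableEquiv.toLp 2 (Fin n → ℝ)) x) :=
      (hmp.integral_comp (MeasurableEquiv.toLp 2 (Fin n → ℝ)).measurableEmbedding _).symm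
    rw [h1, FT]
    refine integral_congr_ae (Eventually.of_forall fun x => ?_)
    have hinner : ⟪(MeasurableEquiv.toLp 2 (Fin n → ℝ)) x, φ ξ⟫ =
        ∑ i, x i * (c * ξ i) := by
      rw [PiLp.inner_apply]
      simp [hφ, RCLike.inner_apply]
      exact Finset.sum_congr rfl fun i _ => by ring
    have hfx : f ((MeasurableEquiv.toLp 2 (Fin n → ℝ)) x) = (J x : ℂ) := by
      rw [hf]
      simp
    simp only [hinner, hfx, Real.fourierChar_apply, Circle.smul_def]
    congr 2
    have hs : 2 * π * -(∑ i, x i * (c * ξ i)) = -(∑ i, ξ i * x i) := by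
      have h' : ∀ i ∈ Finset.univ, x i * (c * ξ i) = c * (ξ i * x i) := fun i _ => by ring
      rw [Finset.sum_congr rfl h', ← Finset.mul_sum, hc]
      field_simp
    rw [hs]
    push_cast
    ring
  have := hRL.comp htend
  refine this.congr fun ξ => ?_
  exact (key ξ).symm

lemma aux_B_eq {n : ℕ} {J : (Fin n → ℝ) → ℝ}
    (hmomint : ∀ k j : Fin n, Integrable fun x : Fin n → ℝ => J x * x k * x j)
    (ξ : Fin n → ℝ) :
    ∫ x : Fin n → ℝ, J x * (∑ i, x i * ξ i) ^ 2 =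
      ∑ k, ∑ j, ξ k * ξ j * ∫ x : Fin n → ℝ, J x * x k * x j := by
  have hpt : ∀ x : Fin n → ℝ, J x * (∑ i, x i * ξ i) ^ 2 =
      ∑ k, ∑ j, ξ k * ξ j * (J x * x k * x j) := by
    intro x
    rw [sq, Finset.sum_mul_sum, Finset.mul_sum]
    refine Finset.sum_congr rfl fun k _ => ?_
    rw [Finset.mul_sum]
    exact Finset.sum_congr rfl fun j _ => by ring
  simp_rw [hpt]
  rw [integral_finset_sum _
    (fun k _ => integrable_finset_sum _ (fun j _ => (hmomint k j).const_mul _))]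
  refine Finset.sum_congr rfl fun k _ => ?_
  rw [integral_finset_sum _ (fun j _ => (hmomint k j).const_mul _)]
  exact Finset.sum_congr rfl fun j _ => integral_const_mul _ _

lemma aux_E_cont {n : ℕ} : Continuous fun ξ : Fin n → ℝ => ∑ i, ξ i ^ 2 :=
  continuous_finset_sum _ fun i _ => (continuous_apply i).pow 2

lemma aux_E_pos {n : ℕ} {ξ : Fin n → ℝ} (h : ξ ≠ 0) : 0 < ∑ i, ξ i ^ 2 := by
  obtain ⟨i, hi⟩ : ∃ i, ξ i ≠ 0 := by
    by_contra hc; push_neg at hc; exact h (funext fun i => hc i)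
  exact Finset.sum_pos' (fun j _ => sq_nonneg _) ⟨i, Finset.mem_univ i, by positivity⟩

lemma aux_E_ne {n : ℕ} {ξ : Fin n → ℝ} (h : 0 < ∑ i, ξ i ^ 2) : ξ ≠ 0 := by
  intro h0; rw [h0] at h; simp at h

lemma aux_compact {n : ℕ} {s : Set (Fin n → ℝ)} (hs : IsClosed s)
    (hb : ∀ ξ ∈ s, (∑ i, ξ i ^ 2) ≤ 1) : IsCompact s := by
  have hsub : s ⊆ Metric.closedBall 0 1 := by
    intro ξ hξ
    rw [Metric.mem_closedBall, dist_zero_right]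
    refine (pi_norm_le_iff_of_nonneg zero_le_one).2 fun i => ?_
    rw [Real.norm_eq_abs]
    have h1 : ξ i ^ 2 ≤ 1 :=
      le_trans (Finset.single_le_sum (fun j _ => sq_nonneg (ξ j)) (Finset.mem_univ i)) (hb ξ hξ)
    exact abs_le.2 ⟨by nlinarith, by nlinarith⟩
  exact (isCompact_closedBall 0 1).of_isClosed_subset hs hsub

lemma aux_mom_integrable {n : ℕ} {J : (Fin n → ℝ) → ℝ}
    (hmomint : ∀ k j : Fin n, Integrable fun x : Fin n → ℝ => J x * x k * x j)
    (v : Fin n → ℝ) :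
    Integrable fun x : Fin n → ℝ => J x * (∑ i, x i * v i) ^ 2 := by
  have hpt : ∀ x : Fin n → ℝ, J x * (∑ i, x i * v i) ^ 2 =
      ∑ k, ∑ j, v k * v j * (J x * x k * x j) := by
    intro x
    rw [sq, Finset.sum_mul_sum, Finset.mul_sum]
    refine Finset.sum_congr rfl fun k _ => ?_
    rw [Finset.mul_sum]
    exact Finset.sum_congr rfl fun j _ => by ring
  simp_rw [hpt]
  exact integrable_finset_sum _ fun k _ =>
    integrable_finset_sum _ fun j _ => (hmomint k j).const_mul _

/-- for J ∈ L¹(ℝⁿ) nonnegative, even, not identically zero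
(∫ J > 0), with finite second moments whose second-moment matrix is positive
definite, Ψ(ξ) = (2π)^{-n}(𝓕[J](0) − 𝓕[J](ξ)) is positive away from 0, tends to
(2π)^{-n}𝓕[J](0) > 0 at infinity (Riemann–Lebesgue), and admits the lower bounds
Ψ(ξ) ≥ c₀|ξ|² for |ξ| ≤ 1 and Ψ(ξ) ≥ c₁ for |ξ| ≥ 1. -/
theorem psi_positive_lower_bounds (n : ℕ) (J : (Fin n → ℝ) → ℝ)
    (hint : Integrable J) (hpos : ∀ x, 0 ≤ J x) (heven : ∀ x, J (-x) = J x)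
    (hne : 0 < ∫ x : Fin n → ℝ, J x)
    (hmomint : ∀ k j : Fin n, Integrable fun x : Fin n → ℝ => J x * x k * x j)
    (hposdef : ∀ v : Fin n → ℝ, v ≠ 0 →
      0 < ∫ x : Fin n → ℝ, J x * (∑ i, x i * v i) ^ 2)
    (Ψ : (Fin n → ℝ) → ℝ)
    (hΨ : ∀ ξ, Ψ ξ = ((2 * π) ^ n)⁻¹ * (FT J 0 - FT J ξ).re) :
    (∀ ξ : Fin n → ℝ, ξ ≠ 0 → 0 < Ψ ξ) ∧
    (0 < ((2 * π) ^ n)⁻¹ * (FT J 0).re ∧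
      Tendsto Ψ (cocompact (Fin n → ℝ)) (nhds (((2 * π) ^ n)⁻¹ * (FT J 0).re))) ∧
    (∃ c₀ > (0:ℝ), ∃ c₁ > (0:ℝ),
      (∀ ξ : Fin n → ℝ, (∑ i, ξ i ^ 2) ≤ 1 → c₀ * ∑ i, ξ i ^ 2 ≤ Ψ ξ) ∧
      (∀ ξ : Fin n → ℝ, 1 ≤ (∑ i, ξ i ^ 2) → c₁ ≤ Ψ ξ)) := by
  classical
  set C : ℝ := ((2 * π) ^ n)⁻¹ with hC
  have hCpos : 0 < C := by
    rw [hC]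
    have := Real.pi_pos
    positivity
  have hcos := fun ξ => aux_FT_re hint ξ
  have hFT0 : (FT J 0).re = ∫ x : Fin n → ℝ, J x := aux_FT_zero_re hint
  have hQ : ∀ ξ : Fin n → ℝ,
      Ψ ξ = C * ∫ x : Fin n → ℝ, J x * (1 - Real.cos (∑ i, ξ i * x i)) := by
    intro ξ
    rw [hΨ ξ, Complex.sub_re, hFT0, hcos ξ]
    congr 1
    rw [← integral_sub hint (aux_integrable_cosmul hint ξ)]
    exact integral_congr_ae (Eventually.of_forall fun x => by ring)
  have hΨpos : ∀ ξ : Fin n → ℝ, ξ ≠ 0 → 0 < Ψ ξ := fun ξ hξ => by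
    rw [hQ ξ]; exact mul_pos hCpos (aux_Q_pos hint hpos hne hξ)
  have hlpos : 0 < C * (FT J 0).re := mul_pos hCpos (hFT0 ▸ hne)
  have hT : Tendsto Ψ (cocompact (Fin n → ℝ)) (nhds (C * (FT J 0).re)) := by
    have h1 : Tendsto (fun ξ : Fin n → ℝ => (FT J ξ).re) (cocompact _) (nhds 0) := by
      have := (Complex.continuous_re.tendsto 0).comp (aux_RL J)
      simpa [Function.comp_def] using this
    have h2 : Tendsto (fun ξ : Fin n → ℝ => C * ((FT J 0).re - (FT J ξ).re)) (cocompact _)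
        (nhds (C * ((FT J 0).re - 0))) := (tendsto_const_nhds.sub h1).const_mul C
    rw [sub_zero] at h2
    refine h2.congr fun ξ => ?_
    rw [hΨ ξ, Complex.sub_re]
  have hΨnonneg : ∀ ξ : Fin n → ℝ, 0 ≤ Ψ ξ := by
    intro ξ
    rw [hQ ξ]
    exact mul_nonneg hCpos.le (integral_nonneg fun x =>
      mul_nonneg (hpos x) (by linarith [Real.cos_le_one (∑ i, ξ i * x i)]))
  have hΨcont : Continuous Ψ := by
    have hfe : Ψ = fun ξ : Fin n → ℝ =>
        C * ((∫ x : Fin n → ℝ, J x) - ∫ x : Fin n → ℝ, J x * Real.cos (∑ i, ξ i * x i)) := by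
      funext ξ; rw [hΨ ξ, Complex.sub_re, hFT0, hcos ξ]
    rw [hfe]
    exact continuous_const.mul (continuous_const.sub (aux_cont_integral_cos hint))
  refine ⟨hΨpos, ⟨hlpos, hT⟩, ?_⟩
  rcases Nat.eq_zero_or_pos n with hn | hn
  · subst hn
    refine ⟨1, one_pos, 1, one_pos, fun ξ _ => ?_, fun ξ h1 => ?_⟩
    · have hsum : (∑ i : Fin 0, ξ i ^ 2) = 0 := by simp
      rw [hsum, mul_zero]
      exact hΨnonneg ξ
    · exfalso
      have hsum : (∑ i : Fin 0, ξ i ^ 2) = 0 := by simp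
      rw [hsum] at h1; norm_num at h1
  -- n ≥ 1
  set E : (Fin n → ℝ) → ℝ := fun ξ => ∑ i, ξ i ^ 2 with hE
  have hEcont : Continuous E := aux_E_cont
  have hEnonneg : ∀ ξ, 0 ≤ E ξ := fun ξ => Finset.sum_nonneg fun i _ => sq_nonneg _
  set B : (Fin n → ℝ) → ℝ := fun ξ => ∫ x : Fin n → ℝ, J x * (∑ i, x i * ξ i) ^ 2 with hB
  have hBcont : Continuous B := by
    have hfe : B = fun ξ : Fin n → ℝ =>
        ∑ k, ∑ j, ξ k * ξ j * ∫ x : Fin n → ℝ, J x * x k * x j :=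
      funext (aux_B_eq hmomint)
    rw [hfe]
    exact continuous_finset_sum _ fun k _ => continuous_finset_sum _ fun j _ =>
      ((continuous_apply k).mul (continuous_apply j)).mul continuous_const
  set e0 : Fin n → ℝ := Pi.single ⟨0, hn⟩ 1 with he0
  have hEe0 : E e0 = 1 := by
    rw [hE, he0]
    simp [Pi.single_apply, apply_ite (fun t : ℝ => t ^ 2), Finset.sum_ite_eq']
  set S : Set (Fin n → ℝ) := {ξ | E ξ = 1} with hS
  have hScomp : IsCompact S :=
    aux_compact (isClosed_eq hEcont continuous_const) (fun ξ hξ => le_of_eq hξ)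
  obtain ⟨u, huS, humin⟩ := hScomp.exists_isMinOn ⟨e0, hEe0⟩ hBcont.continuousOn
  set m : ℝ := B u with hm
  have huE : E u = 1 := huS
  have hmpos : 0 < m := hposdef u (aux_E_ne (by rw [show (∑ i, u i ^ 2) = E u from rfl, huE]; norm_num))
  -- truncation
  have hgint : Integrable (fun x : Fin n → ℝ => J x * E x) := by
    have hfe : (fun x : Fin n → ℝ => J x * E x) = fun x => ∑ i, J x * x i * x i := by
      funext x
      rw [hE, Finset.mul_sum]
      exact Finset.sum_congr rfl fun i _ => by ring
    rw [hfe]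
    exact integrable_finset_sum _ fun i _ => hmomint i i
  set s : ℕ → Set (Fin n → ℝ) := fun k => {x | E x ≤ (k : ℝ)} with hsdef
  have hsmeas : ∀ k, MeasurableSet (s k) := fun k =>
    measurableSet_le hEcont.measurable measurable_const
  have hsmono : Monotone s := by
    intro a b hab x hx
    have hx' : E x ≤ (a : ℝ) := hx
    exact le_trans hx' (Nat.cast_le.2 hab)
  have hsunion : (⋃ k, s k) = Set.univ := by
    ext x
    simp only [Set.mem_iUnion, Set.mem_univ, iff_true]
    obtain ⟨k, hk⟩ := exists_nat_ge (E x)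
    exact ⟨k, hk⟩
  have htails : Tendsto (fun k => ∫ x in s k, J x * E x) atTop
      (nhds (∫ x : Fin n → ℝ, J x * E x)) := by
    have := tendsto_setIntegral_of_monotone hsmeas hsmono hgint.integrableOn
    rwa [hsunion, setIntegral_univ] at this
  have hhalf : (∫ x : Fin n → ℝ, J x * E x) - m / 2 < ∫ x : Fin n → ℝ, J x * E x := by linarith
  obtain ⟨ρ, hρ⟩ := ((htails.eventually (eventually_gt_nhds hhalf)).and (eventually_ge_atTop 1)).exists
  have hρ1 : (1 : ℝ) ≤ (ρ : ℝ) := by exact_mod_cast hρ.2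
  have hρpos : (0 : ℝ) < (ρ : ℝ) := lt_of_lt_of_le one_pos hρ1
  have htail : ∫ x in (s ρ)ᶜ, J x * E x ≤ m / 2 := by
    have hsplit := integral_add_compl (hsmeas ρ) hgint
    have h1 := hρ.1
    linarith
  -- small ξ bound
  have hsmall : ∀ ξ : Fin n → ℝ, ξ ≠ 0 → E ξ ≤ 1 / (ρ : ℝ) →
      m / 8 * E ξ ≤ ∫ x : Fin n → ℝ, J x * (1 - Real.cos (∑ i, ξ i * x i)) := by
    intro ξ hξ0 hξρ
    have hEξpos : 0 < E ξ := aux_E_pos hξ0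
    set r : ℝ := Real.sqrt (E ξ) with hr
    have hrpos : 0 < r := Real.sqrt_pos.2 hEξpos
    have hr2 : r ^ 2 = E ξ := Real.sq_sqrt hEξpos.le
    set u' : Fin n → ℝ := r⁻¹ • ξ with hu'
    have hEu' : E u' = 1 := by
      rw [hE, hu']
      simp only [Pi.smul_apply, smul_eq_mul, mul_pow]
      rw [← Finset.mul_sum, inv_pow, hr2]
      exact inv_mul_cancel₀ hEξpos.ne'
    have hBu' : m ≤ B u' := humin hEu'
    have hCSu' : ∀ x : Fin n → ℝ, (∑ i, x i * u' i) ^ 2 ≤ E x := by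
      intro x
      calc (∑ i, x i * u' i) ^ 2 ≤ (∑ i, x i ^ 2) * (∑ i, u' i ^ 2) :=
            Finset.sum_mul_sq_le_sq_mul_sq Finset.univ x u'
        _ = E x * E u' := rfl
        _ = E x := by rw [hEu', mul_one]
    have htailu' : ∫ x in (s ρ)ᶜ, J x * (∑ i, x i * u' i) ^ 2 ≤ m / 2 := by
      refine le_trans (setIntegral_mono_on ((aux_mom_integrable hmomint u').integrableOn)
        hgint.integrableOn (hsmeas ρ).compl fun x _ => ?_) htail
      exact mul_le_mul_of_nonneg_left (hCSu' x) (hpos x)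
    have hBu'ρ : m / 2 ≤ ∫ x in s ρ, J x * (∑ i, x i * u' i) ^ 2 := by
      have hsplit := integral_add_compl (hsmeas ρ) (aux_mom_integrable hmomint u')
      have hBeq : B u' = ∫ x : Fin n → ℝ, J x * (∑ i, x i * u' i) ^ 2 := rfl
      linarith
    have hLrel : ∀ x : Fin n → ℝ, (∑ i, x i * ξ i) = r * ∑ i, x i * u' i := by
      intro x
      rw [hu', Finset.mul_sum]
      refine Finset.sum_congr rfl fun i _ => ?_
      simp only [Pi.smul_apply, smul_eq_mul]
      field_simp
    have hmono1 : ∫ x in s ρ, J x * (∑ i, x i * ξ i) ^ 2 / 4 ≤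
        ∫ x in s ρ, J x * (1 - Real.cos (∑ i, ξ i * x i)) := by
      refine setIntegral_mono_on ((aux_mom_integrable hmomint ξ).div_const 4).integrableOn
        (aux_integrable_one_sub_cosmul hint ξ).integrableOn (hsmeas ρ) fun x hx => ?_
      have hEx : E x ≤ (ρ : ℝ) := hx
      have ht2 : (∑ i, ξ i * x i) ^ 2 ≤ 1 := by
        calc (∑ i, ξ i * x i) ^ 2 ≤ (∑ i, ξ i ^ 2) * (∑ i, x i ^ 2) :=
              Finset.sum_mul_sq_le_sq_mul_sq Finset.univ ξ x
          _ = E ξ * E x := rfl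
          _ ≤ (1 / (ρ : ℝ)) * (ρ : ℝ) := mul_le_mul hξρ hEx (hEnonneg x) (by positivity)
          _ = 1 := by field_simp
      have hcosb := aux_cos_quadratic ht2
      have hswap : (∑ i, x i * ξ i) = (∑ i, ξ i * x i) :=
        Finset.sum_congr rfl fun i _ => mul_comm _ _
      rw [hswap]
      calc J x * (∑ i, ξ i * x i) ^ 2 / 4 = J x * ((∑ i, ξ i * x i) ^ 2 / 4) := by ring
        _ ≤ J x * (1 - Real.cos (∑ i, ξ i * x i)) :=
            mul_le_mul_of_nonneg_left hcosb (hpos x)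
    have hhom : ∫ x in s ρ, J x * (∑ i, x i * ξ i) ^ 2 / 4 =
        (E ξ / 4) * ∫ x in s ρ, J x * (∑ i, x i * u' i) ^ 2 := by
      rw [← integral_const_mul]
      refine integral_congr_ae (Eventually.of_forall fun x => ?_)
      simp only
      rw [hLrel x, mul_pow, hr2]
      ring
    have hfinal : m / 8 * E ξ ≤ ∫ x in s ρ, J x * (1 - Real.cos (∑ i, ξ i * x i)) := by
      calc m / 8 * E ξ = (E ξ / 4) * (m / 2) := by ring
        _ ≤ (E ξ / 4) * ∫ x in s ρ, J x * (∑ i, x i * u' i) ^ 2 :=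
            mul_le_mul_of_nonneg_left hBu'ρ (by positivity)
        _ = ∫ x in s ρ, J x * (∑ i, x i * ξ i) ^ 2 / 4 := hhom.symm
        _ ≤ _ := hmono1
    refine le_trans hfinal (setIntegral_le_integral (aux_integrable_one_sub_cosmul hint ξ) ?_)
    filter_upwards with x
    exact mul_nonneg (hpos x) (by linarith [Real.cos_le_one (∑ i, ξ i * x i)])
  -- annulus
  set A : Set (Fin n → ℝ) := {ξ | 1 / (ρ : ℝ) ≤ E ξ ∧ E ξ ≤ 1} with hA
  have hAcomp : IsCompact A :=
    aux_compact ((isClosed_le continuous_const hEcont).inter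
      (isClosed_le hEcont continuous_const)) (fun ξ hξ => hξ.2)
  have hAne : A.Nonempty := ⟨e0, by
    constructor
    · rw [hEe0]; exact (div_le_one hρpos).2 hρ1
    · rw [hEe0]⟩
  obtain ⟨w, hwA, hwmin⟩ := hAcomp.exists_isMinOn hAne hΨcont.continuousOn
  have hμA : 0 < Ψ w :=
    hΨpos w (aux_E_ne (lt_of_lt_of_le (by positivity : (0:ℝ) < 1 / (ρ:ℝ)) hwA.1))
  set c₀ : ℝ := min (C * (m / 8)) (Ψ w) with hc₀
  have hc₀pos : 0 < c₀ := lt_min (by positivity) hμA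
  have hbound₀ : ∀ ξ : Fin n → ℝ, (∑ i, ξ i ^ 2) ≤ 1 → c₀ * (∑ i, ξ i ^ 2) ≤ Ψ ξ := by
    intro ξ hξ1
    by_cases hξ0 : ξ = 0
    · subst hξ0
      have hsum : E (0 : Fin n → ℝ) = 0 := by rw [hE]; simp
      rw [show (∑ i, (0 : Fin n → ℝ) i ^ 2) = E 0 from rfl, hsum, mul_zero]
      exact hΨnonneg 0
    · have hEeq : (∑ i, ξ i ^ 2) = E ξ := rfl
      rw [hEeq] at hξ1 ⊢
      rcases le_or_gt (E ξ) (1 / (ρ : ℝ)) with hsm | hlg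
      · have hkey := hsmall ξ hξ0 hsm
        rw [hQ ξ]
        calc c₀ * E ξ ≤ (C * (m / 8)) * E ξ :=
              mul_le_mul_of_nonneg_right (min_le_left _ _) (aux_E_pos hξ0).le
          _ = C * (m / 8 * E ξ) := by ring
          _ ≤ C * ∫ x : Fin n → ℝ, J x * (1 - Real.cos (∑ i, ξ i * x i)) :=
              mul_le_mul_of_nonneg_left hkey hCpos.le
      · have hξA : ξ ∈ A := ⟨hlg.le, hξ1⟩
        calc c₀ * E ξ ≤ c₀ * 1 := mul_le_mul_of_nonneg_left hξ1 hc₀pos.le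
          _ = c₀ := mul_one _
          _ ≤ Ψ w := min_le_right _ _
          _ ≤ Ψ ξ := hwmin hξA
  -- large ξ bound
  have hhalf' : ∀ᶠ ξ in cocompact (Fin n → ℝ), C * (FT J 0).re / 2 < Ψ ξ :=
    hT.eventually (eventually_gt_nhds (by linarith))
  obtain ⟨K, hKcomp, hKsub⟩ := mem_cocompact.1 hhalf'
  set A₁ : Set (Fin n → ℝ) := K ∩ {ξ | 1 ≤ E ξ} with hA₁
  have hA₁comp : IsCompact A₁ :=
    hKcomp.inter_right (isClosed_le continuous_const hEcont)
  rcases A₁.eq_empty_or_nonempty with hA₁e | hA₁ne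
  · refine ⟨c₀, hc₀pos, C * (FT J 0).re / 2, by linarith, hbound₀, fun ξ h1 => ?_⟩
    have hξK : ξ ∉ K := fun hK' =>
      (Set.eq_empty_iff_forall_notMem.1 hA₁e ξ) ⟨hK', h1⟩
    exact (hKsub hξK).le
  · obtain ⟨w₁, hw₁A, hw₁min⟩ := hA₁comp.exists_isMinOn hA₁ne hΨcont.continuousOn
    have hμ₁ : 0 < Ψ w₁ := hΨpos w₁ (aux_E_ne (lt_of_lt_of_le one_pos hw₁A.2))
    refine ⟨c₀, hc₀pos, min (C * (FT J 0).re / 2) (Ψ w₁), lt_min (by linarith) hμ₁,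
      hbound₀, fun ξ h1 => ?_⟩
    by_cases hξK : ξ ∈ K
    · exact le_trans (min_le_right _ _) (hw₁min ⟨hξK, h1⟩)
    · exact le_trans (min_le_left _ _) (hKsub hξK).le
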